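/- Let S and A be nonempty finite sets, let γ ∈ [0,1), let π : S → PMF(A) be a policy, let ρ⁰ ∈ PMF(S), and let P, Q : S → A → PMF(S) be two transition kernels. Let d^π(·, P) and d^π(·, Q) be the discounted occupancy measures d^π(s, K) = (1−γ) Σ_{k≥0} γ^k μ_k^K(s) with μ₀^K = ρ⁰ and μ_{k+1}^K(s') = Σ_s μ_k^K(s) Σ_a π(s)(a) K(s,a)(s'). Then Σ_{s ∈ S} |d^π(s, P) − d^π(s, Q)| ≤ γ(1−γ)^{-1} · Σ_{s' ∈ S} | Σ_{s ∈ S} ( P^π(s'|s) − Q^π(s'|s) ) · d^π(s, P) |, where P^π(s'|s) = Σ_a π(s)(a) P(s,a)(s') and Q^π(s'|s) = Σ_a π(s)(a) Q(s,a)(s'). -/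

import Mathlib

noncomputable section

/-- Policy-mixed one-step state-to-state kernel: `K^π(s'|s) = ∑_a π(s)(a) · K(s,a)(s')`. -/
def kerPi {S A : Type*} [Fintype A] (π : S → PMF A) (K : S → A → PMF S)
    (s s' : S) : ℝ :=
  ∑ a : A, ((π s) a).toReal * ((K s a) s').toReal

/-- State distribution at time step `k` under policy `π`, kernel `K` and initial
distribution `ρ`: `μ₀ = ρ`, `μ_{k+1}(s') = ∑_s μ_k(s) · ∑_a π(s)(a) · K(s,a)(s')`. -/
def stateDist {S A : Type*} [Fintype S] [Fintype A] (π : S → PMF A)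
    (K : S → A → PMF S) (ρ : PMF S) : ℕ → S → ℝ
  | 0 => fun s => (ρ s).toReal
  | (k + 1) => fun s' => ∑ s : S, stateDist π K ρ k s * kerPi π K s s'

/-- Discounted state occupancy measure `d^π(s) = (1-γ) ∑_{k≥0} γ^k μ_k(s)`. -/
def occ {S A : Type*} [Fintype S] [Fintype A] (γ : ℝ) (π : S → PMF A)
    (K : S → A → PMF S) (ρ : PMF S) (s : S) : ℝ :=
  (1 - γ) * ∑' k : ℕ, γ ^ k * stateDist π K ρ k s

/-- Expected discounted return
`J(π, K, r) = ∑_{k≥0} γ^k ∑_s μ_k(s) ∑_a π(s)(a) r(s,a)`. -/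
def ret {S A : Type*} [Fintype S] [Fintype A] (γ : ℝ) (π : S → PMF A)
    (K : S → A → PMF S) (ρ : PMF S) (r : S × A → ℝ) : ℝ :=
  ∑' k : ℕ, γ ^ k * ∑ s : S, stateDist π K ρ k s * ∑ a : A, ((π s) a).toReal * r (s, a)

lemma pmf_sum_toReal {S : Type*} [Fintype S] (p : PMF S) :
    ∑ s : S, (p s).toReal = 1 := by
  have h : ∀ s : S, p s ≠ ⊤ := fun s => (p.apply_ne_top s)
  rw [← ENNReal.toReal_sum (fun s _ => h s), ← tsum_fintype (L := SummationFilter.unconditional S), p.tsum_coe, ENNReal.toReal_one]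

lemma kerPi_nonneg {S A : Type*} [Fintype A] (π : S → PMF A) (K : S → A → PMF S)
    (s s' : S) : 0 ≤ kerPi π K s s' :=
  Finset.sum_nonneg fun a _ => mul_nonneg ENNReal.toReal_nonneg ENNReal.toReal_nonneg

lemma kerPi_sum_one {S A : Type*} [Fintype S] [Fintype A] (π : S → PMF A)
    (K : S → A → PMF S) (s : S) : ∑ s' : S, kerPi π K s s' = 1 := by
  simp only [kerPi]
  rw [Finset.sum_comm]
  simp_rw [← Finset.mul_sum, pmf_sum_toReal, mul_one]
  exact pmf_sum_toReal (π s)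

lemma stateDist_nonneg {S A : Type*} [Fintype S] [Fintype A] (π : S → PMF A)
    (K : S → A → PMF S) (ρ : PMF S) (k : ℕ) (s : S) : 0 ≤ stateDist π K ρ k s := by
  induction k generalizing s with
  | zero => exact ENNReal.toReal_nonneg
  | succ k ih => exact Finset.sum_nonneg fun t _ => mul_nonneg (ih t) (kerPi_nonneg _ _ _ _)

lemma stateDist_sum_one {S A : Type*} [Fintype S] [Fintype A] (π : S → PMF A)
    (K : S → A → PMF S) (ρ : PMF S) (k : ℕ) : ∑ s : S, stateDist π K ρ k s = 1 := by
  induction k with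
  | zero => exact pmf_sum_toReal ρ
  | succ k ih =>
    show ∑ s' : S, ∑ s : S, stateDist π K ρ k s * kerPi π K s s' = 1
    rw [Finset.sum_comm]
    simp_rw [← Finset.mul_sum, kerPi_sum_one, mul_one, ih]

lemma stateDist_le_one {S A : Type*} [Fintype S] [Fintype A] (π : S → PMF A)
    (K : S → A → PMF S) (ρ : PMF S) (k : ℕ) (s : S) : stateDist π K ρ k s ≤ 1 := by
  rw [← stateDist_sum_one π K ρ k]
  exact Finset.single_le_sum (fun t _ => stateDist_nonneg π K ρ k t) (Finset.mem_univ s)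

lemma occ_summable {S A : Type*} [Fintype S] [Fintype A] {γ : ℝ} (hγ0 : 0 ≤ γ) (hγ1 : γ < 1)
    (π : S → PMF A) (K : S → A → PMF S) (ρ : PMF S) (s : S) :
    Summable (fun k : ℕ => γ ^ k * stateDist π K ρ k s) := by
  apply Summable.of_nonneg_of_le
    (fun k => mul_nonneg (pow_nonneg hγ0 k) (stateDist_nonneg π K ρ k s))
    (fun k => ?_) (summable_geometric_of_lt_one hγ0 hγ1)
  calc γ ^ k * stateDist π K ρ k s ≤ γ ^ k * 1 :=
        mul_le_mul_of_nonneg_left (stateDist_le_one π K ρ k s) (pow_nonneg hγ0 k)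
    _ = γ ^ k := mul_one _

lemma occ_flow {S A : Type*} [Fintype S] [Fintype A] {γ : ℝ} (hγ0 : 0 ≤ γ) (hγ1 : γ < 1)
    (π : S → PMF A) (K : S → A → PMF S) (ρ : PMF S) (s' : S) :
    occ γ π K ρ s' = (1 - γ) * (ρ s').toReal + γ * ∑ s : S, occ γ π K ρ s * kerPi π K s s' := by
  have hsum := occ_summable hγ0 hγ1 π K ρ
  have h0 : (∑' k : ℕ, γ ^ k * stateDist π K ρ k s')
      = stateDist π K ρ 0 s' + ∑' k : ℕ, γ ^ (k+1) * stateDist π K ρ (k+1) s' := by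
    rw [Summable.tsum_eq_zero_add (hsum s')]
    simp
  have h1 : ∀ k : ℕ, γ ^ (k+1) * stateDist π K ρ (k+1) s'
      = ∑ s : S, γ * ((γ ^ k * stateDist π K ρ k s) * kerPi π K s s') := by
    intro k
    show γ ^ (k+1) * ∑ s : S, stateDist π K ρ k s * kerPi π K s s' = _
    rw [Finset.mul_sum]
    congr 1; funext s; ring
  have h2 : (∑' k : ℕ, γ ^ (k+1) * stateDist π K ρ (k+1) s')
      = ∑ s : S, γ * ((∑' k : ℕ, γ ^ k * stateDist π K ρ k s) * kerPi π K s s') := by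
    simp_rw [h1]
    rw [Summable.tsum_finsetSum (fun s _ => (((hsum s).mul_right (kerPi π K s s')).mul_left γ))]
    congr 1; funext s
    rw [tsum_mul_left, tsum_mul_right]
  simp only [occ]
  rw [h0, h2, mul_add, Finset.mul_sum, Finset.mul_sum]
  congr 1
  exact Finset.sum_congr rfl fun s _ => by ring


/-- **step (d) in the proof of Theorem 2.** The ℓ₁ distance between the
occupancy measures of two kernels is bounded by `γ(1-γ)⁻¹` times the ℓ₁ norm of the
mismatch of the policy-mixed one-step transition operators applied to one occupancy. -/
theorem occ_l1_le_mismatch {S A : Type*} [Fintype S] [Fintype A] [Nonempty S] [Nonempty A]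
    (γ : ℝ) (hγ0 : 0 ≤ γ) (hγ1 : γ < 1)
    (π : S → PMF A) (ρ : PMF S)
    (P Q : S → A → PMF S) :
    ∑ s : S, |occ γ π P ρ s - occ γ π Q ρ s| ≤
      γ * (1 - γ)⁻¹ *
        ∑ s' : S, |∑ s : S, (kerPi π P s s' - kerPi π Q s s') * occ γ π P ρ s| := by
  set dP := occ γ π P ρ
  set dQ := occ γ π Q ρ
  set M := ∑ s' : S, |∑ s : S, (kerPi π P s s' - kerPi π Q s s') * dP s| with hM
  set T := ∑ s : S, |dP s - dQ s| with hT
  have h1γ : 0 < 1 - γ := by linarith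
  have hx : ∀ s' : S, dP s' - dQ s' =
      γ * (∑ s : S, (kerPi π P s s' - kerPi π Q s s') * dP s
         + ∑ s : S, kerPi π Q s s' * (dP s - dQ s)) := by
    intro s'
    rw [show dP s' = occ γ π P ρ s' from rfl, show dQ s' = occ γ π Q ρ s' from rfl,
      occ_flow hγ0 hγ1 π P ρ s', occ_flow hγ0 hγ1 π Q ρ s']
    rw [← Finset.sum_add_distrib]
    have : ∀ s : S, (kerPi π P s s' - kerPi π Q s s') * occ γ π P ρ s
        + kerPi π Q s s' * (occ γ π P ρ s - occ γ π Q ρ s)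
        = occ γ π P ρ s * kerPi π P s s' - occ γ π Q ρ s * kerPi π Q s s' := by
      intro s; ring
    simp_rw [dP, dQ, this]
    rw [Finset.sum_sub_distrib]
    ring
  have key : T ≤ γ * M + γ * T := by
    have hb : ∀ s' : S, |dP s' - dQ s'| ≤
        γ * (|∑ s : S, (kerPi π P s s' - kerPi π Q s s') * dP s|
          + ∑ s : S, kerPi π Q s s' * |dP s - dQ s|) := by
      intro s'
      rw [hx s', abs_mul, abs_of_nonneg hγ0]
      apply mul_le_mul_of_nonneg_left _ hγ0
      refine (abs_add_le _ _).trans (add_le_add_right ?_ _)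
      refine (Finset.abs_sum_le_sum_abs _ _).trans (le_of_eq ?_)
      congr 1; funext s
      rw [abs_mul, abs_of_nonneg (kerPi_nonneg π Q s s')]
    calc T ≤ ∑ s' : S, γ * (|∑ s : S, (kerPi π P s s' - kerPi π Q s s') * dP s|
          + ∑ s : S, kerPi π Q s s' * |dP s - dQ s|) :=
        Finset.sum_le_sum fun s' _ => hb s'
      _ = γ * M + γ * ∑ s' : S, ∑ s : S, kerPi π Q s s' * |dP s - dQ s| := by
        rw [← Finset.mul_sum, Finset.sum_add_distrib, mul_add, Finset.mul_sum]
      _ = γ * M + γ * T := by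
        congr 1
        rw [Finset.sum_comm]
        congr 1
        rw [hT]
        congr 1; funext s
        rw [← Finset.sum_mul, kerPi_sum_one, one_mul]
  have hMnn : 0 ≤ M := Finset.sum_nonneg fun s' _ => abs_nonneg _
  have h2 : T * (1 - γ) ≤ γ * M := by nlinarith
  have := mul_le_mul_of_nonneg_right h2 (le_of_lt (inv_pos.mpr h1γ))
  rw [mul_assoc, mul_inv_cancel₀ (ne_of_gt h1γ), mul_one] at this
  calc T ≤ γ * M * (1-γ)⁻¹ := this
    _ = γ * (1-γ)⁻¹ * M := by ring
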